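/- Let Ω ⊆ ℝᵐ be a set of positive Lebesgue measure, let A : Ω → ℂ^{n×n} be a measurable, essentially bounded matrix function, let p ∈ (1,∞), and let φ, ψ ∈ (0,π/2) with φ ≠ ψ. Then Δ_p(A) ≤ ( Δ_p(e^{iφ}A)/sin φ − Δ_p(e^{iψ}A)/sin ψ ) / ( cot φ − cot ψ ). -/

import Mathlib

open scoped BigOperators ComplexConjugate Matrix

noncomputable section

namespace Paper

/-- The sesquilinear pairing `⟨z,w⟩ = ∑ j, z j * conj (w j)` on `ℂⁿ`. -/
def herm {n : ℕ} (z w : Fin n → ℂ) : ℂ := ∑ j, z j * conj (w j)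

/-- Euclidean norm of a complex vector, `|z| = √⟨z,z⟩`. -/
def cnorm {n : ℕ} (z : Fin n → ℂ) : ℝ := Real.sqrt (herm z z).re

/-- Componentwise complex conjugate of a vector. -/
def vconj {n : ℕ} (z : Fin n → ℂ) : Fin n → ℂ := fun j => conj (z j)

/-- The ℝ-linear map `𝒥_p(α + iβ) = α/p + iβ/q`, where `1/p + 1/q = 1`,
i.e. `1/q = 1 - 1/p`. -/
def Jmap {n : ℕ} (p : ℝ) (ξ : Fin n → ℂ) : Fin n → ℂ :=
  fun j => (((ξ j).re / p : ℝ) : ℂ) + Complex.I * (((ξ j).im * (1 - 1 / p) : ℝ) : ℂ)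

/-- `Δ_p(A) = 2 · min { Re⟨Aξ, 𝒥_p ξ⟩ : ξ ∈ ℂⁿ, |ξ| = 1 }`. -/
def Deltap {n : ℕ} (p : ℝ) (A : Matrix (Fin n) (Fin n) ℂ) : ℝ :=
  sInf {t : ℝ | ∃ ξ : Fin n → ℂ, cnorm ξ = 1 ∧
    t = 2 * (herm (A.mulVec ξ) (Jmap p ξ)).re}

/-- `Δ_r(A) = min { Re⟨Aξ,ξ⟩ − |1 − 2/r|·|⟨Aξ,ξ̄⟩| : |ξ| = 1 }`, the extension of
`Δ_p` to all `r > 0`. -/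
def DeltaGen {n : ℕ} (r : ℝ) (A : Matrix (Fin n) (Fin n) ℂ) : ℝ :=
  sInf {t : ℝ | ∃ ξ : Fin n → ℂ, cnorm ξ = 1 ∧
    t = (herm (A.mulVec ξ) ξ).re - |1 - 2 / r| * ‖(herm (A.mulVec ξ) (vconj ξ))‖}

/-- Membership in the class `𝒜_{λ,Λ}`:
`Re⟨Aξ,ξ⟩ ≥ λ|ξ|²` and `|⟨Aξ,η⟩| ≤ Λ|ξ||η|`. -/
def memA {n : ℕ} (lam Lam : ℝ) (A : Matrix (Fin n) (Fin n) ℂ) : Prop :=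
  (∀ ξ : Fin n → ℂ, lam * cnorm ξ ^ 2 ≤ (herm (A.mulVec ξ) ξ).re) ∧
  (∀ ξ η : Fin n → ℂ, ‖(herm (A.mulVec ξ) η)‖ ≤ Lam * cnorm ξ * cnorm η)

/-- `λ_A = min { Re⟨Aξ,ξ⟩ : |ξ| = 1 }`. -/
def lamA {n : ℕ} (A : Matrix (Fin n) (Fin n) ℂ) : ℝ :=
  sInf {t : ℝ | ∃ ξ : Fin n → ℂ, cnorm ξ = 1 ∧ t = (herm (A.mulVec ξ) ξ).re}

/-- `Λ_A = max { |⟨Aξ,η⟩| : |ξ| = |η| = 1 }`. -/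
def LamA {n : ℕ} (A : Matrix (Fin n) (Fin n) ℂ) : ℝ :=
  sSup {t : ℝ | ∃ ξ η : Fin n → ℂ, cnorm ξ = 1 ∧ cnorm η = 1 ∧
    t = ‖(herm (A.mulVec ξ) η)‖}

/-- `μ(A) = inf { Re⟨Aξ,ξ⟩/|⟨Aξ,ξ̄⟩| : ⟨Aξ,ξ̄⟩ ≠ 0 }`. -/
def muA {n : ℕ} (A : Matrix (Fin n) (Fin n) ℂ) : ℝ :=
  sInf {t : ℝ | ∃ ξ : Fin n → ℂ, herm (A.mulVec ξ) (vconj ξ) ≠ 0 ∧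
    t = (herm (A.mulVec ξ) ξ).re / ‖(herm (A.mulVec ξ) (vconj ξ))‖}

/-- Second real Fréchet derivative of `F : ℂ → ℝ` at `ζ`, as a bilinear expression. -/
def D2 (F : ℂ → ℝ) (ζ : ℂ) (ξ η : ℂ) : ℝ := fderiv ℝ (fderiv ℝ F) ζ ξ η

/-- `F : ℂ → ℝ` is twice real-Fréchet differentiable at `ζ`. -/
def TwiceDiffAt (F : ℂ → ℝ) (ζ : ℂ) : Prop :=
  DifferentiableAt ℝ F ζ ∧ DifferentiableAt ℝ (fderiv ℝ F) ζ

/-- `H_F^A[ζ;ξ] = ∑ j, D²F(ζ)[ξ_j, (Aξ)_j]`. -/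
def HFA {n : ℕ} (F : ℂ → ℝ) (A : Matrix (Fin n) (Fin n) ℂ) (ζ : ℂ) (ξ : Fin n → ℂ) : ℝ :=
  ∑ j, D2 F ζ (ξ j) (A.mulVec ξ j)

/-- The power function `F_r(ζ) = |ζ|^r`. -/
def Fpow (r : ℝ) (ζ : ℂ) : ℝ := ‖ζ‖ ^ r

/-- Real dot product. -/
def rdot {n : ℕ} (u v : Fin n → ℝ) : ℝ := ∑ j, u j * v j

/-- Euclidean norm of a real vector. -/
def enorm {n : ℕ} (u : Fin n → ℝ) : ℝ := Real.sqrt (∑ j, u j ^ 2)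

/-- Operator norm `‖M‖ = max { |Mu| : |u| = 1 }` of a real matrix. -/
def opnormR {n : ℕ} (M : Matrix (Fin n) (Fin n) ℝ) : ℝ :=
  sSup {t : ℝ | ∃ u : Fin n → ℝ, enorm u = 1 ∧ t = enorm (M.mulVec u)}

/-- Symmetric part `M_s = (M + Mᵀ)/2`. -/
def symPart {n : ℕ} {R : Type*} [Field R] (M : Matrix (Fin n) (Fin n) R) :
    Matrix (Fin n) (Fin n) R := (2 : R)⁻¹ • (M + Mᵀ)

/-- Antisymmetric part `M_a = (M − Mᵀ)/2`. -/
def antiPart {n : ℕ} {R : Type*} [Field R] (M : Matrix (Fin n) (Fin n) R) :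
    Matrix (Fin n) (Fin n) R := (2 : R)⁻¹ • (M - Mᵀ)

/-- `𝒱_p(V) = ((p−2)/(2√(p−1)))·V_s + (p/(2√(p−1)))·V_a`. -/
def Vmap {n : ℕ} (p : ℝ) (V : Matrix (Fin n) (Fin n) ℝ) : Matrix (Fin n) (Fin n) ℝ :=
  ((p - 2) / (2 * Real.sqrt (p - 1))) • symPart V + (p / (2 * Real.sqrt (p - 1))) • antiPart V

/-- A real matrix is (symmetric) positive definite. -/
def RPosDef {n : ℕ} (M : Matrix (Fin n) (Fin n) ℝ) : Prop :=
  Mᵀ = M ∧ ∀ u : Fin n → ℝ, u ≠ 0 → 0 < rdot (M.mulVec u) u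

/-- The complex matrix `U + iV` built from two real matrices. -/
def cplx {n : ℕ} (U V : Matrix (Fin n) (Fin n) ℝ) : Matrix (Fin n) (Fin n) ℂ :=
  Matrix.of fun i j => ((U i j : ℂ) + Complex.I * (V i j : ℂ))

/-- `Φ : ℂ×ℂ → ℝ` is twice real-Fréchet differentiable at `v`. -/
def TwiceDiffAt2 (Φ : ℂ × ℂ → ℝ) (v : ℂ × ℂ) : Prop :=
  DifferentiableAt ℝ Φ v ∧ DifferentiableAt ℝ (fderiv ℝ Φ) v

/-- `H_Φ^{(A,B)}[v;ω] = ∑ j, D²Φ(v)[(ω₁ⱼ, ω₂ⱼ), ((Aω₁)ⱼ, (Bω₂)ⱼ)]`. -/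
def HAB {n : ℕ} (Φ : ℂ × ℂ → ℝ) (A B : Matrix (Fin n) (Fin n) ℂ) (v : ℂ × ℂ)
    (ω₁ ω₂ : Fin n → ℂ) : ℝ :=
  ∑ j, fderiv ℝ (fderiv ℝ Φ) v (ω₁ j, ω₂ j) (A.mulVec ω₁ j, B.mulVec ω₂ j)

/-- The Nazarov–Treil Bellman function `Q_{p,δ}` (with `q = p/(p−1)` passed explicitly). -/
def QNT (p q δ : ℝ) (ζ η : ℂ) : ℝ :=
  ‖ζ‖ ^ p + ‖η‖ ^ q +
    δ * (if ‖ζ‖ ^ p ≤ ‖η‖ ^ q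
      then ‖ζ‖ ^ (2 : ℝ) * ‖η‖ ^ (2 - q)
      else (2 / p) * ‖ζ‖ ^ p + (2 / q - 1) * ‖η‖ ^ q)

/-- `Δ_p` of a matrix-valued function on a subset `Ω ⊆ ℝᵐ`:
`2 · essinf_{x∈Ω} min_{|ξ|=1} Re⟨A(x)ξ, 𝒥_p ξ⟩`. -/
def DeltapAE {m n : ℕ} (p : ℝ) (A : (Fin m → ℝ) → Matrix (Fin n) (Fin n) ℂ)
    (Ω : Set (Fin m → ℝ)) : ℝ :=
  2 * essInf (fun x => sInf {t : ℝ | ∃ ξ : Fin n → ℂ, cnorm ξ = 1 ∧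
      t = (herm ((A x).mulVec ξ) (Jmap p ξ)).re}) (MeasureTheory.volume.restrict Ω)

end Paper

section AuxStatement14

open MeasureTheory
open scoped Pointwise

private lemma essInf_eq_sSup' {α : Type*} [MeasurableSpace α] (μ : Measure α) (f : α → ℝ) :
    essInf f μ = sSup {t : ℝ | ∀ᵐ x ∂μ, t ≤ f x} := by
  rw [essInf, Filter.liminf_eq]

private lemma essInf_const_mul' {α : Type*} [MeasurableSpace α] (μ : Measure α) {s : ℝ}
    (hs : 0 < s) (f : α → ℝ) : essInf (fun x => s * f x) μ = s * essInf f μ := by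
  rw [essInf_eq_sSup', essInf_eq_sSup', ← smul_eq_mul, ← Real.sSup_smul_of_nonneg hs.le]
  congr 1
  ext t
  constructor
  · intro ht
    refine ⟨t / s, ?_, by show s * (t / s) = t; field_simp⟩
    show ∀ᵐ x ∂μ, t / s ≤ f x
    filter_upwards [ht] with x hx
    rw [div_le_iff₀' hs]
    exact hx
  · rintro ⟨u, hu, rfl⟩
    show ∀ᵐ x ∂μ, s * u ≤ s * f x
    filter_upwards [hu] with x hx
    exact mul_le_mul_of_nonneg_left hx hs.le

private lemma keylem {α ι : Type*} [MeasurableSpace α] [Nonempty ι] (μ : Measure α)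
    (hμ : (MeasureTheory.ae μ).NeBot)
    (a b : α → ι → ℝ) (K : ℝ)
    (hK : ∀ᵐ x ∂μ, ∀ i, |a x i| ≤ K ∧ |b x i| ≤ K)
    {c d : ℝ} (hcd : d < c) :
    essInf (fun x => sInf (Set.range (a x))) μ * (c - d) ≤
      essInf (fun x => sInf (Set.range (fun i => c * a x i - b x i))) μ
      - essInf (fun x => sInf (Set.range (fun i => d * a x i - b x i))) μ := by
  classical
  have hbd : ∀ (e : ℝ) (x : α), (∀ i, |a x i| ≤ K ∧ |b x i| ≤ K) →
      ∀ i, |e * a x i - b x i| ≤ (|e| + 1) * K := by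
    intro e x hx i
    calc |e * a x i - b x i| ≤ |e * a x i| + |b x i| := abs_sub _ _
    _ = |e| * |a x i| + |b x i| := by rw [abs_mul]
    _ ≤ |e| * K + K := by
        have : |e| * |a x i| ≤ |e| * K := mul_le_mul_of_nonneg_left (hx i).1 (abs_nonneg e)
        linarith [(hx i).2]
    _ = (|e| + 1) * K := by ring
  set P : ℝ → α → ℝ := fun e x => sInf (Set.range (fun i => e * a x i - b x i)) with hP
  have hPbdd : ∀ (e : ℝ) (x : α), (∀ i, |a x i| ≤ K ∧ |b x i| ≤ K) →
      BddBelow (Set.range (fun i => e * a x i - b x i)) := by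
    intro e x hx
    refine ⟨-((|e| + 1) * K), ?_⟩
    rintro t ⟨i, rfl⟩
    show -((|e| + 1) * K) ≤ e * a x i - b x i
    linarith [(abs_le.mp (hbd e x hx i)).1]
  have hPlo : ∀ (e : ℝ), ∀ᵐ x ∂μ, -((|e| + 1) * K) ≤ P e x := by
    intro e
    filter_upwards [hK] with x hx
    refine le_csInf (Set.range_nonempty _) ?_
    rintro t ⟨i, rfl⟩
    show -((|e| + 1) * K) ≤ e * a x i - b x i
    linarith [(abs_le.mp (hbd e x hx i)).1]
  have hPhi : ∀ (e : ℝ), ∀ᵐ x ∂μ, P e x ≤ (|e| + 1) * K := by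
    intro e
    filter_upwards [hK] with x hx
    obtain ⟨i⟩ := ‹Nonempty ι›
    exact le_trans (csInf_le (hPbdd e x hx) ⟨i, rfl⟩) (abs_le.mp (hbd e x hx i)).2
  set L : (α → ℝ) → Set ℝ := fun f => {t : ℝ | ∀ᵐ x ∂μ, t ≤ f x} with hL
  have hLne : ∀ e : ℝ, (L (P e)).Nonempty := fun e => ⟨-((|e| + 1) * K), hPlo e⟩
  have hLbdd : ∀ e : ℝ, BddAbove (L (P e)) := by
    intro e
    refine ⟨(|e| + 1) * K, fun t ht => ?_⟩
    have ht' : ∀ᵐ x ∂μ, t ≤ P e x := ht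
    obtain ⟨x, hx1, hx2⟩ := (ht'.and (hPhi e)).exists
    exact hx1.trans hx2
  set E : α → ℝ := fun x => sInf (Set.range (a x)) with hE
  have hEbdd : ∀ x, (∀ i, |a x i| ≤ K ∧ |b x i| ≤ K) → BddBelow (Set.range (a x)) := by
    intro x hx
    refine ⟨-K, ?_⟩
    rintro t ⟨i, rfl⟩
    show -K ≤ a x i
    linarith [(abs_le.mp (hx i).1).1]
  have hLEne : (L E).Nonempty := by
    refine ⟨-K, ?_⟩
    show ∀ᵐ x ∂μ, -K ≤ E x
    filter_upwards [hK] with x hx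
    refine le_csInf (Set.range_nonempty _) ?_
    rintro t ⟨i, rfl⟩
    linarith [(abs_le.mp (hx i).1).1]
  have hmain : ∀ t ∈ L E, t * (c - d) ≤ sSup (L (P c)) - sSup (L (P d)) := by
    intro t ht
    have hstep : ∀ s ∈ L (P d), (s + (c - d) * t) ∈ L (P c) := by
      intro s hs
      have ht' : ∀ᵐ x ∂μ, t ≤ E x := ht
      have hs' : ∀ᵐ x ∂μ, s ≤ P d x := hs
      show ∀ᵐ x ∂μ, s + (c - d) * t ≤ P c x
      filter_upwards [hK, ht', hs'] with x hx1 hx2 hx3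
      refine le_csInf (Set.range_nonempty _) ?_
      rintro u ⟨i, rfl⟩
      show s + (c - d) * t ≤ c * a x i - b x i
      have hEi : E x ≤ a x i := csInf_le (hEbdd x hx1) ⟨i, rfl⟩
      have hPi : P d x ≤ d * a x i - b x i := csInf_le (hPbdd d x hx1) ⟨i, rfl⟩
      have h1 : t ≤ a x i := le_trans hx2 hEi
      have h2 : (c - d) * t ≤ (c - d) * a x i :=
        mul_le_mul_of_nonneg_left h1 (by linarith)
      have h3 : s ≤ d * a x i - b x i := le_trans hx3 hPi
      nlinarith
    have h2 : sSup (L (P d)) ≤ sSup (L (P c)) - (c - d) * t := by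
      refine csSup_le (hLne d) fun s hs => ?_
      have := le_csSup (hLbdd c) (hstep s hs)
      linarith
    nlinarith
  have hfin : sSup (L E) ≤ (sSup (L (P c)) - sSup (L (P d))) / (c - d) := by
    refine csSup_le hLEne fun t ht => ?_
    rw [le_div_iff₀ (by linarith : (0:ℝ) < c - d)]
    exact hmain t ht
  rw [essInf_eq_sSup', essInf_eq_sSup', essInf_eq_sSup']
  exact (le_div_iff₀ (by linarith : (0:ℝ) < c - d)).mp hfin

private lemma sphere_ne (n : ℕ) (hn : 0 < n) : ∃ ξ : Fin n → ℂ, Paper.cnorm ξ = 1 := by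
  refine ⟨fun j => if j = ⟨0, hn⟩ then 1 else 0, ?_⟩
  unfold Paper.cnorm Paper.herm
  rw [Finset.sum_eq_single (⟨0, hn⟩ : Fin n)] <;> simp +contextual

private lemma cnorm_sum {n : ℕ} {ξ : Fin n → ℂ} (hξ : Paper.cnorm ξ = 1) :
    ∑ j, Complex.normSq (ξ j) = 1 := by
  unfold Paper.cnorm Paper.herm at hξ
  rw [Real.sqrt_eq_one] at hξ
  rw [← hξ]
  simp [Complex.mul_conj]

private lemma abs_coord_le {n : ℕ} {ξ : Fin n → ℂ} (hξ : Paper.cnorm ξ = 1) (j : Fin n) :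
    ‖ξ j‖ ≤ 1 := by
  have h := cnorm_sum hξ
  have h1 : Complex.normSq (ξ j) ≤ 1 := by
    rw [← h]
    exact Finset.single_le_sum (fun k _ => Complex.normSq_nonneg (ξ k)) (Finset.mem_univ j)
  rw [Complex.norm_def]
  calc Real.sqrt (Complex.normSq (ξ j)) ≤ Real.sqrt 1 := Real.sqrt_le_sqrt h1
  _ = 1 := Real.sqrt_one

private lemma abs_J_le {n : ℕ} {p : ℝ} (hp : 1 < p) {ξ : Fin n → ℂ} (hξ : Paper.cnorm ξ = 1)
    (j : Fin n) : ‖Paper.Jmap p ξ j‖ ≤ 2 := by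
  have hre : |(ξ j).re| ≤ 1 := le_trans (Complex.abs_re_le_norm _) (abs_coord_le hξ j)
  have him : |(ξ j).im| ≤ 1 := le_trans (Complex.abs_im_le_norm _) (abs_coord_le hξ j)
  have h1 : |(ξ j).re / p| ≤ 1 := by
    rw [abs_div, abs_of_pos (by linarith : (0:ℝ) < p)]
    exact le_trans (div_le_self (abs_nonneg _) hp.le) hre
  have h2 : |(ξ j).im * (1 - 1 / p)| ≤ 1 := by
    rw [abs_mul]
    have hp1 : (0:ℝ) < 1/p := by positivity
    have hp2 : 1/p < 1 := by rw [div_lt_one (by linarith)]; exact hp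
    have : |1 - 1/p| ≤ 1 := by rw [abs_of_nonneg (by linarith)]; linarith
    calc |(ξ j).im| * |1 - 1/p| ≤ 1 * 1 := mul_le_mul him this (abs_nonneg _) (by norm_num)
    _ = 1 := by norm_num
  unfold Paper.Jmap
  calc ‖(((((ξ j).re / p : ℝ)) : ℂ) + Complex.I * (((ξ j).im * (1 - 1 / p) : ℝ) : ℂ))‖
      ≤ ‖((((ξ j).re / p : ℝ)) : ℂ)‖
        + ‖(Complex.I * (((ξ j).im * (1 - 1 / p) : ℝ) : ℂ))‖ := norm_add_le _ _
  _ = |(ξ j).re / p| + |(ξ j).im * (1 - 1 / p)| := by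
      rw [norm_mul, Complex.norm_I, one_mul, Complex.norm_real, Complex.norm_real,
        Real.norm_eq_abs, Real.norm_eq_abs]
  _ ≤ 2 := by linarith

private lemma abs_herm_le {n : ℕ} (M : Matrix (Fin n) (Fin n) ℂ) {C : ℝ} (hC0 : 0 ≤ C)
    (hC : ∀ i j, ‖M i j‖ ≤ C) {p : ℝ} (hp : 1 < p) {ξ : Fin n → ℂ}
    (hξ : Paper.cnorm ξ = 1) :
    ‖Paper.herm (M.mulVec ξ) (Paper.Jmap p ξ)‖ ≤ 2 * n ^ 2 * C := by
  have hMv : ∀ j, ‖M.mulVec ξ j‖ ≤ n * C := by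
    intro j
    calc ‖M.mulVec ξ j‖ = ‖∑ k, M j k * ξ k‖ := by
          simp [Matrix.mulVec, dotProduct]
    _ ≤ ∑ k, ‖M j k * ξ k‖ := norm_sum_le _ _
    _ ≤ ∑ _k : Fin n, C := by
        refine Finset.sum_le_sum fun k _ => ?_
        rw [norm_mul]
        calc ‖M j k‖ * ‖ξ k‖ ≤ C * 1 :=
              mul_le_mul (hC j k) (abs_coord_le hξ k) (norm_nonneg _) hC0
        _ = C := mul_one C
    _ = n * C := by simp [mul_comm]
  unfold Paper.herm
  calc ‖∑ j, M.mulVec ξ j * conj (Paper.Jmap p ξ j)‖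
      ≤ ∑ j, ‖M.mulVec ξ j * conj (Paper.Jmap p ξ j)‖ := norm_sum_le _ _
  _ ≤ ∑ _j : Fin n, (n * C) * 2 := by
      refine Finset.sum_le_sum fun j _ => ?_
      rw [norm_mul, Complex.norm_conj]
      exact mul_le_mul (hMv j) (abs_J_le hp hξ j) (norm_nonneg _) (by positivity)
  _ = 2 * n ^ 2 * C := by simp; ring

private lemma herm_smul_left {n : ℕ} (z : ℂ) (v w : Fin n → ℂ) :
    Paper.herm (z • v) w = z * Paper.herm v w := by
  unfold Paper.herm
  rw [Finset.mul_sum]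
  exact Finset.sum_congr rfl fun j _ => by simp [mul_assoc]

private lemma exp_mul_re (θ : ℝ) (u : ℂ) : (Complex.exp (θ * Complex.I) * u).re
    = Real.cos θ * u.re - Real.sin θ * u.im := by
  rw [Complex.exp_mul_I]
  simp [add_mul, Complex.mul_re, ← Complex.ofReal_cos, ← Complex.ofReal_sin]
  ring

end AuxStatement14

/-- `Δ_p(A) ≤ (Δ_p(e^{iφ}A)/sin φ − Δ_p(e^{iψ}A)/sin ψ)/(cot φ − cot ψ)`. -/
theorem statement14 (m n : ℕ) (Ω : Set (Fin m → ℝ))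
    (hΩ : 0 < MeasureTheory.volume Ω)
    (A : (Fin m → ℝ) → Matrix (Fin n) (Fin n) ℂ) (hmeas : ∀ i j, Measurable (fun x => A x i j))
    (hbdd : ∃ C : ℝ, ∀ᵐ x ∂(MeasureTheory.volume.restrict Ω),
      ∀ i j, ‖(A x i j)‖ ≤ C)
    (p : ℝ) (hp : 1 < p)
    (φ ψ : ℝ) (hφ : φ ∈ Set.Ioo 0 (Real.pi / 2)) (hψ : ψ ∈ Set.Ioo 0 (Real.pi / 2))
    (hfp : φ ≠ ψ) :
    Paper.DeltapAE p A Ω ≤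
      (Paper.DeltapAE p (fun x => Complex.exp (φ * Complex.I) • A x) Ω / Real.sin φ
        - Paper.DeltapAE p (fun x => Complex.exp (ψ * Complex.I) • A x) Ω / Real.sin ψ)
      / (Real.cot φ - Real.cot ψ) := by
  classical
  open MeasureTheory in
  open scoped Pointwise in
  set μ : Measure (Fin m → ℝ) := MeasureTheory.volume.restrict Ω with hμdef
  have hμ0 : μ ≠ 0 := by
    rw [hμdef, Ne, Measure.restrict_eq_zero]
    exact hΩ.ne'
  have hne : (MeasureTheory.ae μ).NeBot := ae_neBot.mpr hμ0
  have hsφ : 0 < Real.sin φ := Real.sin_pos_of_pos_of_lt_pi hφ.1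
    (lt_trans hφ.2 (by linarith [Real.pi_pos]))
  have hsψ : 0 < Real.sin ψ := Real.sin_pos_of_pos_of_lt_pi hψ.1
    (lt_trans hψ.2 (by linarith [Real.pi_pos]))
  rcases Nat.eq_zero_or_pos n with hn | hn
  · -- degenerate case n = 0
    subst hn
    have hempty : ∀ B : (Fin m → ℝ) → Matrix (Fin 0) (Fin 0) ℂ, Paper.DeltapAE p B Ω = 0 := by
      intro B
      unfold Paper.DeltapAE
      have : ∀ x : Fin m → ℝ, {t : ℝ | ∃ ξ : Fin 0 → ℂ, Paper.cnorm ξ = 1 ∧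
          t = (Paper.herm ((B x).mulVec ξ) (Paper.Jmap p ξ)).re} = (∅ : Set ℝ) := by
        intro x
        ext t
        simp only [Set.mem_setOf_eq, Set.mem_empty_iff_false, iff_false]
        rintro ⟨ξ, hξ, -⟩
        unfold Paper.cnorm Paper.herm at hξ
        simp at hξ
      simp only [this, Real.sInf_empty]
      rw [essInf_const _ hμ0]
      ring
    rw [hempty, hempty, hempty]
    simp
  · -- main case
    obtain ⟨C, hC⟩ := hbdd
    set C' : ℝ := max C 0 with hC'def
    have hC'0 : 0 ≤ C' := le_max_right _ _
    have hC' : ∀ᵐ x ∂μ, ∀ i j, ‖A x i j‖ ≤ C' := by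
      filter_upwards [hC] with x hx i j
      exact le_trans (hx i j) (le_max_left _ _)
    set ι := {ξ : Fin n → ℂ // Paper.cnorm ξ = 1} with hιdef
    haveI : Nonempty ι := by
      obtain ⟨ξ, hξ⟩ := sphere_ne n hn
      exact ⟨⟨ξ, hξ⟩⟩
    set h : (Fin m → ℝ) → (Fin n → ℂ) → ℂ :=
      fun x ξ => Paper.herm ((A x).mulVec ξ) (Paper.Jmap p ξ) with hhdef
    set a : (Fin m → ℝ) → ι → ℝ := fun x i => (h x i.1).re with hadef
    set b : (Fin m → ℝ) → ι → ℝ := fun x i => (h x i.1).im with hbdef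
    set K : ℝ := 2 * n ^ 2 * C' with hKdef
    have hK : ∀ᵐ x ∂μ, ∀ i : ι, |a x i| ≤ K ∧ |b x i| ≤ K := by
      filter_upwards [hC'] with x hx i
      have habs : ‖h x i.1‖ ≤ K := abs_herm_le (A x) hC'0 (hx) hp i.2
      exact ⟨le_trans (Complex.abs_re_le_norm _) habs, le_trans (Complex.abs_im_le_norm _) habs⟩
    -- rewriting of the three DeltapAE quantities
    have hbase : Paper.DeltapAE p A Ω = 2 * essInf (fun x => sInf (Set.range (a x))) μ := by
      unfold Paper.DeltapAE
      congr 2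
      funext x
      congr 1
      ext t
      constructor
      · rintro ⟨ξ, hξ, rfl⟩; exact ⟨⟨ξ, hξ⟩, rfl⟩
      · rintro ⟨i, rfl⟩; exact ⟨i.1, i.2, rfl⟩
    have hrot : ∀ θ : ℝ, 0 < Real.sin θ →
        Paper.DeltapAE p (fun x => Complex.exp (θ * Complex.I) • A x) Ω
          = Real.sin θ * (2 * essInf
              (fun x => sInf (Set.range (fun i : ι => Real.cot θ * a x i - b x i))) μ) := by
      intro θ hsθ
      unfold Paper.DeltapAE
      have hset : ∀ x : Fin m → ℝ, {t : ℝ | ∃ ξ : Fin n → ℂ, Paper.cnorm ξ = 1 ∧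
          t = (Paper.herm ((Complex.exp (θ * Complex.I) • A x).mulVec ξ)
            (Paper.Jmap p ξ)).re}
          = Real.sin θ • Set.range (fun i : ι => Real.cot θ * a x i - b x i) := by
        intro x
        have hval : ∀ ξ : Fin n → ℂ,
            (Paper.herm ((Complex.exp (θ * Complex.I) • A x).mulVec ξ) (Paper.Jmap p ξ)).re
            = Real.sin θ * (Real.cot θ * (h x ξ).re - (h x ξ).im) := by
          intro ξ
          rw [Matrix.smul_mulVec, herm_smul_left, exp_mul_re]
          rw [Real.cot_eq_cos_div_sin]
          field_simp
          rfl
        ext t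
        simp only [Set.mem_setOf_eq, Set.mem_smul_set, smul_eq_mul]
        constructor
        · rintro ⟨ξ, hξ, rfl⟩
          exact ⟨Real.cot θ * (h x ξ).re - (h x ξ).im, ⟨⟨ξ, hξ⟩, rfl⟩, (hval ξ).symm⟩
        · rintro ⟨u, ⟨i, rfl⟩, rfl⟩
          exact ⟨i.1, i.2, (hval i.1).symm⟩
      have : (fun x => sInf {t : ℝ | ∃ ξ : Fin n → ℂ, Paper.cnorm ξ = 1 ∧
          t = (Paper.herm ((Complex.exp (θ * Complex.I) • A x).mulVec ξ)
            (Paper.Jmap p ξ)).re})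
          = fun x => Real.sin θ *
              sInf (Set.range (fun i : ι => Real.cot θ * a x i - b x i)) := by
        funext x
        rw [hset x, Real.sInf_smul_of_nonneg hsθ.le, smul_eq_mul]
      rw [this, essInf_const_mul' μ hsθ]
      ring
    rw [hbase, hrot φ hsφ, hrot ψ hsψ]
    rw [mul_comm (Real.sin φ), mul_comm (Real.sin ψ), mul_div_assoc, mul_div_assoc,
      div_self (ne_of_gt hsφ), div_self (ne_of_gt hsψ), mul_one, mul_one]
    set M := essInf (fun x => sInf (Set.range (a x))) μ with hM
    set p₁ := essInf (fun x => sInf (Set.range (fun i : ι => Real.cot φ * a x i - b x i))) μ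
    set p₂ := essInf (fun x => sInf (Set.range (fun i : ι => Real.cot ψ * a x i - b x i))) μ
    -- `cot φ ≠ cot ψ`
    have hcosφ : 0 < Real.cos φ := Real.cos_pos_of_mem_Ioo
      ⟨by linarith [Real.pi_pos, hφ.1], hφ.2⟩
    have hcosψ : 0 < Real.cos ψ := Real.cos_pos_of_mem_Ioo
      ⟨by linarith [Real.pi_pos, hψ.1], hψ.2⟩
    have hcc : Real.cot φ ≠ Real.cot ψ := by
      intro hcontra
      apply hfp
      have htan : Real.tan φ = Real.tan ψ := by
        rw [Real.cot_eq_cos_div_sin, Real.cot_eq_cos_div_sin] at hcontra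
        rw [Real.tan_eq_sin_div_cos, Real.tan_eq_sin_div_cos]
        rw [div_eq_div_iff (ne_of_gt hsφ) (ne_of_gt hsψ)] at hcontra
        rw [div_eq_div_iff (ne_of_gt hcosφ) (ne_of_gt hcosψ)]
        linarith
      exact Real.injOn_tan ⟨by linarith [Real.pi_pos, hφ.1], hφ.2⟩
        ⟨by linarith [Real.pi_pos, hψ.1], hψ.2⟩ htan
    rcases lt_or_gt_of_ne hcc with hlt | hgt
    · -- cot φ < cot ψ
      have hk := keylem μ hne a b K hK hlt
      rw [show (2 * p₁ - 2 * p₂) / (Real.cot φ - Real.cot ψ)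
          = (2 * p₂ - 2 * p₁) / (Real.cot ψ - Real.cot φ) by
        rw [← neg_div_neg_eq]; ring_nf]
      rw [le_div_iff₀ (by linarith : (0:ℝ) < Real.cot ψ - Real.cot φ)]
      nlinarith
    · -- cot ψ < cot φ
      have hk := keylem μ hne a b K hK hgt
      rw [le_div_iff₀ (by linarith : (0:ℝ) < Real.cot φ - Real.cot ψ)]
      nlinarith
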